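/- arXiv:math/0110129 — 2 statements merged into one kernel-verified Lean document; each statement's English description precedes it below -/
import Mathlib

section
/- Fix integers n ≥ 1 and g ≥ 1. Let M(n,g) be the presented group with generators σ_1,…,σ_{n−1}, b_1,…,b_{2g} and relations: the braid relations; b_rσ_i = σ_ib_r for all r and i ≠ 1; b_sσ_1⁻¹b_rσ_1⁻¹ = σ_1b_rσ_1⁻¹b_s for 1 ≤ s < r ≤ 2g; b_rσ_1⁻¹b_rσ_1⁻¹ = σ_1⁻¹b_rσ_1⁻¹b_r for all r; and b_1b_2⁻¹b_3b_4⁻¹⋯b_{2g−1}b_{2g}⁻¹·b_1⁻¹b_2b_3⁻¹b_4⋯b_{2g−1}⁻¹b_{2g} = Δ. Let GM(n,g) be the presented group with generators σ_1,…,σ_{n−1}, a_1,…,a_{2g} and relations: the braid relations; [a_r, A_{2,s}] = 1 for 1 ≤ r,s ≤ 2g with r ≠ s; [a_r, σ_i] = 1 for i ≠ 1; [a_1⋯a_r, A_{2,r}] = σ_1² for 1 ≤ r ≤ 2g; and a_1⋯a_{2g}a_1⁻¹⋯a_{2g}⁻¹ = Δ, where A_{2,r} := σ_1⁻¹(a_1⋯a_{r−1}a_{r+1}⁻¹⋯a_{2g}⁻¹)σ_1⁻¹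 and [x,y] := xyx⁻¹y⁻¹. Then there exists a group homomorphism from GM(n,g) to M(n,g) sending (the class of) σ_i to σ_i for all 1 ≤ i ≤ n−1, and sending a_j to b_j for odd j and a_j to b_j⁻¹ for even j (1 ≤ j ≤ 2g). -/
/-- Generators: `Sum.inl i` is `σ_{i+1}`; `Sum.inr j` is the surface generator with
(1-based) index `j + 1`. -/
abbrev Gens (n g : ℕ) : Type := Fin (n - 1) ⊕ Fin (2 * g)

/-- `σ_{i+1}` as an element of the free group. -/
def sg {n g : ℕ} (i : Fin (n - 1)) : FreeGroup (Gens n g) := FreeGroup.of (Sum.inl i)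

/-- The surface generator with 1-based index `j + 1` (`b_{j+1}` for `M`, `a_{j+1}` for
`GM`). -/
def ug {n g : ℕ} (j : Fin (2 * g)) : FreeGroup (Gens n g) := FreeGroup.of (Sum.inr j)

/-- The full-twist word `Δ = σ_1 σ_2 ⋯ σ_{n-2} σ_{n-1}² σ_{n-2} ⋯ σ_2 σ_1`, written as
`(σ_1 ⋯ σ_{n-1}) * (σ_{n-1} ⋯ σ_1)`. -/
def deltaWord (n g : ℕ) : FreeGroup (Gens n g) :=
  (List.ofFn fun i : Fin (n - 1) => sg i).prod *
    ((List.ofFn fun i : Fin (n - 1) => sg i).reverse).prod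

/-- The braid relators. -/
def braidRels (n g : ℕ) : Set (FreeGroup (Gens n g)) :=
  {r | (∃ i j : Fin (n - 1), (i : ℕ) + 1 = (j : ℕ) ∧
        r = sg i * sg j * sg i * (sg j * sg i * sg j)⁻¹)
    ∨ (∃ i j : Fin (n - 1), ((i : ℕ) + 2 ≤ (j : ℕ) ∨ (j : ℕ) + 2 ≤ (i : ℕ)) ∧
        r = sg i * sg j * (sg j * sg i)⁻¹)}

/-- The word `b_1 b_2⁻¹ b_3 b_4⁻¹ ⋯ b_{2g-1} b_{2g}⁻¹`: the exponent of `b_{j+1}` is `+1`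
for even `j : Fin (2g)` (odd 1-based index) and `-1` otherwise. -/
def trLeft (n g : ℕ) : FreeGroup (Gens n g) :=
  (List.ofFn fun j : Fin (2 * g) =>
    if (j : ℕ) % 2 = 0 then ug j else (ug j)⁻¹).prod

/-- The word `b_1⁻¹ b_2 b_3⁻¹ b_4 ⋯ b_{2g-1}⁻¹ b_{2g}`. -/
def trRight (n g : ℕ) : FreeGroup (Gens n g) :=
  (List.ofFn fun j : Fin (2 * g) =>
    if (j : ℕ) % 2 = 0 then (ug j)⁻¹ else ug j).prod

/-- The relators of the presentation `M(n, g)` (Theorem 5.4), with `ug j = b_{j+1}`.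
Relations involving `σ_1` are guarded by `0 < n - 1`, i.e. by `n > 1`. -/
def mRels (n g : ℕ) : Set (FreeGroup (Gens n g)) :=
  braidRels n g ∪
  {r | -- b_r σ_i = σ_i b_r  (i ≠ 1)
      (∃ (i : Fin (n - 1)) (c : Fin (2 * g)), (i : ℕ) ≠ 0 ∧
        r = ug c * sg i * (sg i * ug c)⁻¹)
    -- b_s σ_1⁻¹ b_r σ_1⁻¹ = σ_1 b_r σ_1⁻¹ b_s  (s < r)
    ∨ (∃ (h : 0 < n - 1) (s c : Fin (2 * g)), (s : ℕ) < (c : ℕ) ∧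
        r = ug s * (sg ⟨0, h⟩)⁻¹ * ug c * (sg ⟨0, h⟩)⁻¹ *
          (sg ⟨0, h⟩ * ug c * (sg ⟨0, h⟩)⁻¹ * ug s)⁻¹)
    -- b_r σ_1⁻¹ b_r σ_1⁻¹ = σ_1⁻¹ b_r σ_1⁻¹ b_r
    ∨ (∃ (h : 0 < n - 1) (c : Fin (2 * g)),
        r = ug c * (sg ⟨0, h⟩)⁻¹ * ug c * (sg ⟨0, h⟩)⁻¹ *
          ((sg ⟨0, h⟩)⁻¹ * ug c * (sg ⟨0, h⟩)⁻¹ * ug c)⁻¹)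
    -- TR
    ∨ r = trLeft n g * trRight n g * (deltaWord n g)⁻¹}

/-- The word `A_{2,r} = σ_1⁻¹ (a_1 ⋯ a_{r-1} a_{r+1}⁻¹ ⋯ a_{2g}⁻¹) σ_1⁻¹` of
Gonzàlez-Meneses' presentation, with `ug j = a_{j+1}`. -/
def aWord (n g : ℕ) (h : 0 < n - 1) (c : Fin (2 * g)) : FreeGroup (Gens n g) :=
  (sg ⟨0, h⟩)⁻¹ *
    (List.ofFn fun t : Fin (2 * g) =>
      if (t : ℕ) < (c : ℕ) then ug t else if (t : ℕ) = (c : ℕ) then 1 else (ug t)⁻¹).prod *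
    (sg ⟨0, h⟩)⁻¹

/-- The prefix word `a_1 a_2 ⋯ a_{r}` (here `c` is the 0-based index of `a_r`). -/
def prefixWord (n g : ℕ) (c : Fin (2 * g)) : FreeGroup (Gens n g) :=
  (List.ofFn fun t : Fin (2 * g) => if (t : ℕ) ≤ (c : ℕ) then ug t else 1).prod

/-- The relators of Gonzàlez-Meneses' presentation `GM(n, g)`, with `ug j = a_{j+1}`.
Relations involving `σ_1` are guarded by `0 < n - 1`, i.e. by `n > 1`. -/
def gmRels (n g : ℕ) : Set (FreeGroup (Gens n g)) :=
  braidRels n g ∪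
  {r | -- [a_r, A_{2,s}] = 1  (r ≠ s)
      (∃ (h : 0 < n - 1) (c s : Fin (2 * g)), c ≠ s ∧
        r = ug c * aWord n g h s * (ug c)⁻¹ * (aWord n g h s)⁻¹)
    -- [a_r, σ_i] = 1  (i ≠ 1)
    ∨ (∃ (c : Fin (2 * g)) (i : Fin (n - 1)), (i : ℕ) ≠ 0 ∧
        r = ug c * sg i * (ug c)⁻¹ * (sg i)⁻¹)
    -- [a_1 ⋯ a_r, A_{2,r}] = σ_1²
    ∨ (∃ (h : 0 < n - 1) (c : Fin (2 * g)),
        r = prefixWord n g c * aWord n g h c * (prefixWord n g c)⁻¹ * (aWord n g h c)⁻¹ *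
          ((sg ⟨0, h⟩) ^ 2)⁻¹)
    -- a_1 ⋯ a_{2g} a_1⁻¹ ⋯ a_{2g}⁻¹ = Δ
    ∨ r = (List.ofFn fun t : Fin (2 * g) => ug t).prod *
        (List.ofFn fun t : Fin (2 * g) => (ug t)⁻¹).prod * (deltaWord n g)⁻¹}



namespace GMHelp
variable {G : Type*} [Group G]

/-- conjugation helpers -/
theorem conj_inv' (g X Y : G) (h : g * X * g⁻¹ = Y) : g * X⁻¹ * g⁻¹ = Y⁻¹ := by
  rw [← h]; group

theorem conj_flip (g X Y : G) (h : g * X * g⁻¹ = Y) : g⁻¹ * Y * g = X := by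
  rw [← h]; group

theorem commute_of_conj {g X : G} (h : g * X * g⁻¹ = X) : Commute g X := by
  have : g * X = X * g := by
    calc g * X = (g * X * g⁻¹) * g := by group
    _ = X * g := by rw [h]
  exact this

section words
variable (x : G) (b : ℕ → G)

def ee (t : ℕ) : G := if t % 2 = 0 then b t else (b t)⁻¹

def qw (i k : ℕ) : G := ((List.range' i k).map (ee b)).prod

def tw (i k : ℕ) : G := ((List.range' i k).map (fun t => (ee b t)⁻¹)).prod

@[simp] theorem qw_zero (i : ℕ) : qw b i 0 = 1 := rfl
@[simp] theorem tw_zero (i : ℕ) : tw b i 0 = 1 := rfl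

theorem qw_succ_left (i k : ℕ) : qw b i (k+1) = ee b i * qw b (i+1) k := by
  simp [qw, List.range'_succ]

theorem tw_succ_left (i k : ℕ) : tw b i (k+1) = (ee b i)⁻¹ * tw b (i+1) k := by
  simp [tw, List.range'_succ]

theorem qw_append (i k l : ℕ) : qw b i (k + l) = qw b i k * qw b (i+k) l := by
  unfold qw
  rw [← List.range'_append_1 (s := i) (m := k) (n := l), List.map_append, List.prod_append]

theorem tw_append (i k l : ℕ) : tw b i (k + l) = tw b i k * tw b (i+k) l := by
  unfold tw
  rw [← List.range'_append_1 (s := i) (m := k) (n := l), List.map_append, List.prod_append]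

theorem qw_succ_right (i k : ℕ) : qw b i (k+1) = qw b i k * ee b (i+k) := by
  rw [qw_append]; simp [qw, List.range'_succ]

/-- generic segment-conjugation lemma -/
theorem seg (w X : ℕ → G) (lo hi : ℕ)
    (h : ∀ t, lo ≤ t → t < hi → (w t)⁻¹ * X t * w t = X (t+1)) :
    ∀ k i, lo ≤ i → i + k ≤ hi →
      (((List.range' i k).map w).prod)⁻¹ * X i * ((List.range' i k).map w).prod = X (i+k) := by
  intro k
  induction k with
  | zero => intro i _ _; simp
  | succ k ih =>
    intro i hlo hhi
    rw [List.range'_succ]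
    simp only [List.map_cons, List.prod_cons, mul_inv_rev]
    have h1 : (w i)⁻¹ * X i * w i = X (i+1) := h i hlo (by omega)
    have h2 := ih (i+1) (by omega) (by omega)
    calc (((List.range' (i+1) k).map w).prod)⁻¹ * (w i)⁻¹ * X i *
          (w i * ((List.range' (i+1) k).map w).prod)
        = (((List.range' (i+1) k).map w).prod)⁻¹ * ((w i)⁻¹ * X i * w i) *
          ((List.range' (i+1) k).map w).prod := by group
      _ = X (i+1+k) := by rw [h1]; exact h2
      _ = X (i + (k+1)) := by ring_nf

end words


theorem conj_flip2 (g X Y : G) (h : g⁻¹ * X * g = Y) : g * Y * g⁻¹ = X := by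
  rw [← h]; group

theorem conj_mul (g X Y : G) : g * (X * Y) * g⁻¹ = (g * X * g⁻¹) * (g * Y * g⁻¹) := by group

theorem conj_inv (g X : G) : g * X⁻¹ * g⁻¹ = (g * X * g⁻¹)⁻¹ := by group

section Rules
variable (x : G) (b : ℕ → G) (m : ℕ)
variable (H3 : ∀ s c, s < c → c < m → b s * (x⁻¹ * b c * x⁻¹) = x * b c * x⁻¹ * b s)
variable (H4 : ∀ c, c < m → b c * (x⁻¹ * b c * x⁻¹) = x⁻¹ * b c * x⁻¹ * b c)

section
variable {s c : ℕ} (hsc : s < c) (hc : c < m)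
include H3 hsc hc

theorem r1 : b s * (x⁻¹ * b c * x⁻¹) * (b s)⁻¹ = x * b c * x⁻¹ := by
  rw [H3 s c hsc hc]; group

theorem r2 : (b s)⁻¹ * (x * b c * x⁻¹) * b s = x⁻¹ * b c * x⁻¹ :=
  conj_flip _ _ _ (r1 x b m H3 hsc hc)

theorem r3 : (b c)⁻¹ * (x⁻¹ * b s * x⁻¹) * b c = x⁻¹ * b s * x := by
  have h := H3 s c hsc hc
  have h2 : (x⁻¹ * b s * x⁻¹) * b c = b c * (x⁻¹ * b s * x) := by
    calc (x⁻¹ * b s * x⁻¹) * b c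
        = x⁻¹ * (b s * (x⁻¹ * b c * x⁻¹)) * x := by group
      _ = x⁻¹ * (x * b c * x⁻¹ * b s) * x := by rw [h]
      _ = b c * (x⁻¹ * b s * x) := by group
  calc (b c)⁻¹ * (x⁻¹ * b s * x⁻¹) * b c = (b c)⁻¹ * ((x⁻¹ * b s * x⁻¹) * b c) := by group
    _ = (b c)⁻¹ * (b c * (x⁻¹ * b s * x)) := by rw [h2]
    _ = x⁻¹ * b s * x := by group

theorem r4 : b c * (x⁻¹ * b s * x) * (b c)⁻¹ = x⁻¹ * b s * x⁻¹ :=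
  conj_flip2 _ _ _ (r3 x b m H3 hsc hc)

end

section
variable {c : ℕ} (hc : c < m)
include H4 hc

theorem r5 : Commute (b c) (x⁻¹ * b c * x⁻¹) := by
  have h := H4 c hc
  exact h

theorem r6 : (b c)⁻¹ * (x * b c * x⁻¹) * b c = x⁻¹ * b c * x := by
  have h := H4 c hc
  have h2 : (x * b c * x⁻¹) * b c = b c * (x⁻¹ * b c * x) := by
    calc (x * b c * x⁻¹) * b c = x * (b c * (x⁻¹ * b c * x⁻¹)) * x := by group
      _ = x * (x⁻¹ * b c * x⁻¹ * b c) * x := by rw [h]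
      _ = b c * (x⁻¹ * b c * x) := by group
  calc (b c)⁻¹ * (x * b c * x⁻¹) * b c = (b c)⁻¹ * ((x * b c * x⁻¹) * b c) := by group
    _ = (b c)⁻¹ * (b c * (x⁻¹ * b c * x)) := by rw [h2]
    _ = x⁻¹ * b c * x := by group

theorem r7 : b c * (x⁻¹ * b c * x) * (b c)⁻¹ = x * b c * x⁻¹ :=
  conj_flip2 _ _ _ (r6 x b m H4 hc)

theorem r8 : Commute (b c * x⁻¹ * b c) x := by
  have h := H4 c hc
  have : (b c * x⁻¹ * b c) * x⁻¹ = x⁻¹ * (b c * x⁻¹ * b c) := by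
    calc (b c * x⁻¹ * b c) * x⁻¹ = b c * (x⁻¹ * b c * x⁻¹) := by group
      _ = x⁻¹ * b c * x⁻¹ * b c := h
      _ = x⁻¹ * (b c * x⁻¹ * b c) := by group
  have h2 : Commute (b c * x⁻¹ * b c) x⁻¹ := this
  simpa using h2.inv_right

end
end Rules



section Seg
variable (x : G) (b : ℕ → G) (m : ℕ)
variable (H3 : ∀ s c, s < c → c < m → b s * (x⁻¹ * b c * x⁻¹) = x * b c * x⁻¹ * b s)
variable (H4 : ∀ c, c < m → b c * (x⁻¹ * b c * x⁻¹) = x⁻¹ * b c * x⁻¹ * b c)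

include H3 in
theorem S1 {c : ℕ} (hc : c < m) : ∀ k i, i + k ≤ c →
    (qw b i k)⁻¹ * (if i % 2 = 0 then x * b c * x⁻¹ else x⁻¹ * b c * x⁻¹) * qw b i k
      = (if (i+k) % 2 = 0 then x * b c * x⁻¹ else x⁻¹ * b c * x⁻¹) := by
  intro k i hik
  exact seg (ee b) (fun t => if t % 2 = 0 then x * b c * x⁻¹ else x⁻¹ * b c * x⁻¹) 0 c
    (by
      intro t _ htc
      rcases Nat.even_or_odd t with he | ho
      · have h0 : t % 2 = 0 := Nat.even_iff.mp he
        have h1 : (t+1) % 2 ≠ 0 := by omega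
        simp only [ee, h0, if_pos, if_neg h1, reduceIte]
        exact r2 x b m H3 htc hc
      · have h0 : t % 2 ≠ 0 := Nat.odd_iff.mp ho ▸ by omega
        have h1 : (t+1) % 2 = 0 := by omega
        simp only [ee, if_neg h0, h1, reduceIte, inv_inv]
        exact r1 x b m H3 htc hc)
    k i (Nat.zero_le _) hik

include H3 in
theorem S2 {c : ℕ} (hc : c < m) : ∀ k i, i + k ≤ c →
    (tw b i k)⁻¹ * (if i % 2 = 0 then x⁻¹ * b c * x⁻¹ else x * b c * x⁻¹) * tw b i k
      = (if (i+k) % 2 = 0 then x⁻¹ * b c * x⁻¹ else x * b c * x⁻¹) := by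
  intro k i hik
  exact seg (fun t => (ee b t)⁻¹) (fun t => if t % 2 = 0 then x⁻¹ * b c * x⁻¹ else x * b c * x⁻¹) 0 c
    (by
      intro t _ htc
      rcases Nat.even_or_odd t with he | ho
      · have h0 : t % 2 = 0 := Nat.even_iff.mp he
        have h1 : (t+1) % 2 ≠ 0 := by omega
        simp only [ee, h0, if_pos, if_neg h1, reduceIte, inv_inv]
        exact r1 x b m H3 htc hc
      · have h0 : t % 2 ≠ 0 := Nat.odd_iff.mp ho ▸ by omega
        have h1 : (t+1) % 2 = 0 := by omega
        simp only [ee, if_neg h0, h1, reduceIte, inv_inv]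
        exact r2 x b m H3 htc hc)
    k i (Nat.zero_le _) hik

include H3 in
theorem S3 {c : ℕ} (hc : c < m) : ∀ k i, c < i → i + k ≤ m →
    (qw b i k)⁻¹ * (if i % 2 = 0 then x⁻¹ * b c * x⁻¹ else x⁻¹ * b c * x) * qw b i k
      = (if (i+k) % 2 = 0 then x⁻¹ * b c * x⁻¹ else x⁻¹ * b c * x) := by
  intro k i hci hik
  exact seg (ee b) (fun t => if t % 2 = 0 then x⁻¹ * b c * x⁻¹ else x⁻¹ * b c * x) (c+1) m
    (by
      intro t hct htm
      rcases Nat.even_or_odd t with he | ho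
      · have h0 : t % 2 = 0 := Nat.even_iff.mp he
        have h1 : (t+1) % 2 ≠ 0 := by omega
        simp only [ee, h0, if_pos, if_neg h1, reduceIte]
        exact r3 x b m H3 (by omega) htm
      · have h0 : t % 2 ≠ 0 := Nat.odd_iff.mp ho ▸ by omega
        have h1 : (t+1) % 2 = 0 := by omega
        simp only [ee, if_neg h0, h1, reduceIte, inv_inv]
        exact r4 x b m H3 (by omega) htm)
    k i (by omega) hik

include H3 in
theorem S4 {c : ℕ} (hc : c < m) : ∀ k i, c < i → i + k ≤ m →
    (tw b i k)⁻¹ * (if i % 2 = 0 then x⁻¹ * b c * x else x⁻¹ * b c * x⁻¹) * tw b i k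
      = (if (i+k) % 2 = 0 then x⁻¹ * b c * x else x⁻¹ * b c * x⁻¹) := by
  intro k i hci hik
  exact seg (fun t => (ee b t)⁻¹) (fun t => if t % 2 = 0 then x⁻¹ * b c * x else x⁻¹ * b c * x⁻¹) (c+1) m
    (by
      intro t hct htm
      rcases Nat.even_or_odd t with he | ho
      · have h0 : t % 2 = 0 := Nat.even_iff.mp he
        have h1 : (t+1) % 2 ≠ 0 := by omega
        simp only [ee, h0, if_pos, if_neg h1, reduceIte, inv_inv]
        exact r4 x b m H3 (by omega) htm
      · have h0 : t % 2 ≠ 0 := Nat.odd_iff.mp ho ▸ by omega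
        have h1 : (t+1) % 2 = 0 := by omega
        simp only [ee, if_neg h0, h1, reduceIte, inv_inv]
        exact r3 x b m H3 (by omega) htm)
    k i (by omega) hik

end Seg


section Pair
variable (x : G) (b : ℕ → G) (m : ℕ)
variable (H3 : ∀ s c, s < c → c < m → b s * (x⁻¹ * b c * x⁻¹) = x * b c * x⁻¹ * b s)

include H3 in
theorem pairK {i c : ℕ} (h1 : i + 1 < c) (hc : c < m) :
    Commute (b c) (x⁻¹ * (b i * (b (i+1))⁻¹) * x) := by
  apply commute_of_conj
  have e1 := r4 x b m H3 (show i < c by omega) hc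
  have e2 := r4 x b m H3 (show i + 1 < c from h1) hc
  calc b c * (x⁻¹ * (b i * (b (i+1))⁻¹) * x) * (b c)⁻¹
      = (b c * (x⁻¹ * b i * x) * (b c)⁻¹) * (b c * (x⁻¹ * b (i+1) * x) * (b c)⁻¹)⁻¹ := by
        group
    _ = (x⁻¹ * b i * x⁻¹) * (x⁻¹ * b (i+1) * x⁻¹)⁻¹ := by rw [e1, e2]
    _ = x⁻¹ * (b i * (b (i+1))⁻¹) * x := by group

include H3 in
theorem pairSuf {i c : ℕ} (hci : c < i) (him : i + 1 < m) :
    Commute (b c) (x * ((b i)⁻¹ * b (i+1)) * x⁻¹) := by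
  rw [← Commute.inv_left_iff]
  apply commute_of_conj
  have e1 := r2 x b m H3 (show c < i by omega) (by omega)
  have e2 := r2 x b m H3 (show c < i + 1 by omega) him
  calc (b c)⁻¹ * (x * ((b i)⁻¹ * b (i+1)) * x⁻¹) * ((b c)⁻¹)⁻¹
      = ((b c)⁻¹ * (x * b i * x⁻¹) * b c)⁻¹ * ((b c)⁻¹ * (x * b (i+1) * x⁻¹) * b c) := by
        group
    _ = (x⁻¹ * b i * x⁻¹)⁻¹ * (x⁻¹ * b (i+1) * x⁻¹) := by rw [e1, e2]
    _ = x * ((b i)⁻¹ * b (i+1)) * x⁻¹ := by group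

include H3 in
theorem pairR {i c : ℕ} (h1 : i + 1 < c) (hc : c < m) :
    Commute (x * b c * x⁻¹) (b i * (b (i+1))⁻¹) := by
  symm
  apply commute_of_conj
  have e1 := r1 x b m H3 (show i < c by omega) hc
  have e2 := r2 x b m H3 (show i + 1 < c from h1) hc
  calc (b i * (b (i+1))⁻¹) * (x * b c * x⁻¹) * (b i * (b (i+1))⁻¹)⁻¹
      = b i * ((b (i+1))⁻¹ * (x * b c * x⁻¹) * b (i+1)) * (b i)⁻¹ := by group
    _ = b i * (x⁻¹ * b c * x⁻¹) * (b i)⁻¹ := by rw [e2]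
    _ = x * b c * x⁻¹ := e1

include H3 in
theorem V1 {c : ℕ} (hc : c < m) : ∀ k i, i % 2 = 0 → i + 2*k ≤ c →
    Commute (b c) (x⁻¹ * qw b i (2*k) * x) := by
  intro k
  induction k with
  | zero => intro i _ _; simp
  | succ k ih =>
    intro i hi hik
    have hsplit : qw b i (2*(k+1)) = (b i * (b (i+1))⁻¹) * qw b (i+2) (2*k) := by
      have h2 : 2*(k+1) = 2 + 2*k := by omega
      rw [h2, qw_append]
      congr 1
      rw [qw_succ_left, qw_succ_left]
      have h0 : i % 2 = 0 := hi
      have h1 : (i+1) % 2 ≠ 0 := by omega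
      simp [ee, h0, h1]
    rw [hsplit]
    have hre : x⁻¹ * ((b i * (b (i+1))⁻¹) * qw b (i+2) (2*k)) * x
        = (x⁻¹ * (b i * (b (i+1))⁻¹) * x) * (x⁻¹ * qw b (i+2) (2*k) * x) := by group
    rw [hre]
    exact (pairK x b m H3 (by omega) hc).mul_right (ih (i+2) (by omega) (by omega))

include H3 in
theorem V2 {c : ℕ} (hc : c < m) : ∀ k i, i % 2 = 0 → c < i → i + 2*k ≤ m →
    Commute (b c) (x * tw b i (2*k) * x⁻¹) := by
  intro k
  induction k with
  | zero => intro i _ _ _; simp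
  | succ k ih =>
    intro i hi hci hik
    have hsplit : tw b i (2*(k+1)) = ((b i)⁻¹ * b (i+1)) * tw b (i+2) (2*k) := by
      have h2 : 2*(k+1) = 2 + 2*k := by omega
      rw [h2, tw_append]
      congr 1
      rw [tw_succ_left, tw_succ_left]
      have h0 : i % 2 = 0 := hi
      have h1 : (i+1) % 2 ≠ 0 := by omega
      simp [ee, h0, h1]
    rw [hsplit]
    have hre : x * (((b i)⁻¹ * b (i+1)) * tw b (i+2) (2*k)) * x⁻¹
        = (x * ((b i)⁻¹ * b (i+1)) * x⁻¹) * (x * tw b (i+2) (2*k) * x⁻¹) := by group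
    rw [hre]
    exact (pairSuf x b m H3 hci (by omega)).mul_right (ih (i+2) (by omega) (by omega) (by omega))

include H3 in
theorem RComQ {c : ℕ} (hc : c < m) : ∀ k i, i % 2 = 0 → i + 2*k ≤ c →
    Commute (x * b c * x⁻¹) (qw b i (2*k)) := by
  intro k
  induction k with
  | zero => intro i _ _; simp
  | succ k ih =>
    intro i hi hik
    have hsplit : qw b i (2*(k+1)) = (b i * (b (i+1))⁻¹) * qw b (i+2) (2*k) := by
      have h2 : 2*(k+1) = 2 + 2*k := by omega
      rw [h2, qw_append]
      congr 1
      rw [qw_succ_left, qw_succ_left]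
      have h1 : (i+1) % 2 ≠ 0 := by omega
      simp [ee, hi, h1]
    rw [hsplit]
    exact (pairR x b m H3 (by omega) hc).mul_right (ih (i+2) (by omega) (by omega))

end Pair


theorem conj_chain {p q X Y Z : G} (h1 : p⁻¹ * X * p = Y) (h2 : q⁻¹ * Y * q = Z) :
    (p * q)⁻¹ * X * (p * q) = Z := by rw [← h2, ← h1]; group

section Main
variable (x : G) (b : ℕ → G) (m : ℕ)
variable (H3 : ∀ s c, s < c → c < m → b s * (x⁻¹ * b c * x⁻¹) = x * b c * x⁻¹ * b s)
variable (H4 : ∀ c, c < m → b c * (x⁻¹ * b c * x⁻¹) = x⁻¹ * b c * x⁻¹ * b c)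

theorem qw_one (c : ℕ) : qw b c 1 = ee b c := by
  rw [qw_succ_left]; simp

theorem tw_one (c : ℕ) : tw b c 1 = (ee b c)⁻¹ := by
  rw [tw_succ_left]; simp

include H4 in
theorem conj_commute {g X : G} (h : Commute g X) : g * X * g⁻¹ = X := by
  rw [h.eq]; group

include H3 H4 in
/-- conjugation of `x b_c x⁻¹` by `W s` equals `x⁻¹ b_c x`, for `c ≠ s`. -/
theorem WconjR {s c : ℕ} (hs : s < m) (hc : c < m) (hcs : c ≠ s) (hm : m % 2 = 0) :
    (qw b 0 s * tw b (s+1) (m-1-s))⁻¹ * (x * b c * x⁻¹) * (qw b 0 s * tw b (s+1) (m-1-s))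
      = x⁻¹ * b c * x := by
  rcases Nat.lt_or_ge s c with hlt | hge
  · -- c > s : split the suffix
    have esplit : tw b (s+1) (m-1-s)
        = tw b (s+1) (c-1-s) * (tw b c 1 * tw b (c+1) (m-1-c)) := by
      rw [show m-1-s = (c-1-s) + (1 + (m-1-c)) from by omega, tw_append, tw_append]
      rw [show s+1+(c-1-s) = c from by omega, show c + 1 = c+1 from rfl]
    rw [esplit]
    -- segment A1 : through qw 0 s
    have A1 := S1 x b m H3 hc s 0 (by omega)
    have A2 := S2 x b m H3 hc (c-1-s) (s+1) (by omega)
    have A4 := S4 x b m H3 hc (m-1-c) (c+1) (by omega) (by omega)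
    rw [show (0:ℕ) + s = s from by omega] at A1
    rw [show s+1+(c-1-s) = c from by omega] at A2
    rw [show c+1+(m-1-c) = m from by omega] at A4
    simp only [Nat.zero_mod, reduceIte, hm] at A1 A2 A4
    -- slot at c
    rcases Nat.even_or_odd c with hce | hco
    · have hc0 : c % 2 = 0 := Nat.even_iff.mp hce
      have hc1 : (c+1) % 2 ≠ 0 := by omega
      simp only [hc0, hc1, reduceIte, if_neg] at A1 A2 A4 ⊢
      have A3 : (tw b c 1)⁻¹ * (x⁻¹ * b c * x⁻¹) * tw b c 1 = x⁻¹ * b c * x⁻¹ := by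
        rw [tw_one]
        simp only [ee, hc0, reduceIte, inv_inv]
        exact conj_commute x b m H4 (r5 x b m H4 hc)
      -- chain: states R -> (s parity) -> L at c -> L -> K
      rcases Nat.even_or_odd s with hse | hso
      · have hs0 : s % 2 = 0 := Nat.even_iff.mp hse
        have hs1 : (s+1) % 2 ≠ 0 := by omega
        simp only [hs0, hs1, reduceIte, if_neg] at A1 A2
        exact conj_chain A1 (conj_chain A2 (conj_chain A3 A4))
      · have hs0 : s % 2 ≠ 0 := by simp [Nat.odd_iff.mp hso]
        have hs1 : (s+1) % 2 = 0 := by omega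
        simp only [hs0, hs1, reduceIte, if_neg] at A1 A2
        exact conj_chain A1 (conj_chain A2 (conj_chain A3 A4))
    · have hc0 : c % 2 ≠ 0 := by simp [Nat.odd_iff.mp hco]
      have hc1 : (c+1) % 2 = 0 := by omega
      simp only [hc0, hc1, reduceIte, if_neg] at A1 A2 A4 ⊢
      have A3 : (tw b c 1)⁻¹ * (x * b c * x⁻¹) * tw b c 1 = x⁻¹ * b c * x := by
        rw [tw_one]
        simp only [ee, hc0, reduceIte, if_neg, inv_inv]
        exact r6 x b m H4 hc
      rcases Nat.even_or_odd s with hse | hso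
      · have hs0 : s % 2 = 0 := Nat.even_iff.mp hse
        have hs1 : (s+1) % 2 ≠ 0 := by omega
        simp only [hs0, hs1, reduceIte, if_neg] at A1 A2
        exact conj_chain A1 (conj_chain A2 (conj_chain A3 A4))
      · have hs0 : s % 2 ≠ 0 := by simp [Nat.odd_iff.mp hso]
        have hs1 : (s+1) % 2 = 0 := by omega
        simp only [hs0, hs1, reduceIte, if_neg] at A1 A2
        exact conj_chain A1 (conj_chain A2 (conj_chain A3 A4))
  · -- c < s : split the prefix
    have hlt : c < s := by omega
    have esplit : qw b 0 s = qw b 0 c * (qw b c 1 * qw b (c+1) (s-1-c)) := by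
      have e1 : qw b 0 s = qw b 0 (c + (1 + (s-1-c))) := by
        rw [show c + (1 + (s-1-c)) = s from by omega]
      rw [e1, qw_append, qw_append, show (0:ℕ) + c = c from by omega]
    rw [esplit]
    have A1 := S1 x b m H3 hc c 0 (by omega)
    have A3 := S3 x b m H3 hc (s-1-c) (c+1) (by omega) (by omega)
    have A4 := S4 x b m H3 hc (m-1-s) (s+1) (by omega) (by omega)
    rw [show (0:ℕ) + c = c from by omega] at A1
    rw [show c+1+(s-1-c) = s from by omega] at A3
    rw [show s+1+(m-1-s) = m from by omega] at A4
    simp only [Nat.zero_mod, reduceIte, hm] at A1 A3 A4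
    rcases Nat.even_or_odd c with hce | hco
    · have hc0 : c % 2 = 0 := Nat.even_iff.mp hce
      have hc1 : (c+1) % 2 ≠ 0 := by omega
      simp only [hc0, hc1, reduceIte, if_neg] at A1 A3 A4 ⊢
      have A2 : (qw b c 1)⁻¹ * (x * b c * x⁻¹) * qw b c 1 = x⁻¹ * b c * x := by
        rw [qw_one]
        simp only [ee, hc0, reduceIte]
        exact r6 x b m H4 hc
      rcases Nat.even_or_odd s with hse | hso
      · have hs0 : s % 2 = 0 := Nat.even_iff.mp hse
        have hs1 : (s+1) % 2 ≠ 0 := by omega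
        simp only [hs0, hs1, reduceIte, if_neg] at A3 A4
        rw [← conj_chain A1 (conj_chain A2 (conj_chain A3 A4))]; group
      · have hs0 : s % 2 ≠ 0 := by simp [Nat.odd_iff.mp hso]
        have hs1 : (s+1) % 2 = 0 := by omega
        simp only [hs0, hs1, reduceIte, if_neg] at A3 A4
        rw [← conj_chain A1 (conj_chain A2 (conj_chain A3 A4))]; group
    · have hc0 : c % 2 ≠ 0 := by simp [Nat.odd_iff.mp hco]
      have hc1 : (c+1) % 2 = 0 := by omega
      simp only [hc0, hc1, reduceIte, if_neg] at A1 A3 A4 ⊢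
      have A2 : (qw b c 1)⁻¹ * (x⁻¹ * b c * x⁻¹) * qw b c 1 = x⁻¹ * b c * x⁻¹ := by
        rw [qw_one]
        simp only [ee, hc0, reduceIte, if_neg, inv_inv]
        exact conj_commute x b m H4 (r5 x b m H4 hc)
      rcases Nat.even_or_odd s with hse | hso
      · have hs0 : s % 2 = 0 := Nat.even_iff.mp hse
        have hs1 : (s+1) % 2 ≠ 0 := by omega
        simp only [hs0, hs1, reduceIte, if_neg] at A3 A4
        rw [← conj_chain A1 (conj_chain A2 (conj_chain A3 A4))]; group
      · have hs0 : s % 2 ≠ 0 := by simp [Nat.odd_iff.mp hso]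
        have hs1 : (s+1) % 2 = 0 := by omega
        simp only [hs0, hs1, reduceIte, if_neg] at A3 A4
        rw [← conj_chain A1 (conj_chain A2 (conj_chain A3 A4))]; group

end Main


theorem conj_commute' {g X : G} (h : Commute g X) : g⁻¹ * X * g = X := by
  have h2 := h.inv_left.eq
  calc g⁻¹ * X * g = (g⁻¹ * X) * g := by group
    _ = (X * g⁻¹) * g := by rw [h2]
    _ = X := by group

section Main2
variable (x : G) (b : ℕ → G) (m : ℕ)
variable (H3 : ∀ s c, s < c → c < m → b s * (x⁻¹ * b c * x⁻¹) = x * b c * x⁻¹ * b s)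
variable (H4 : ∀ c, c < m → b c * (x⁻¹ * b c * x⁻¹) = x⁻¹ * b c * x⁻¹ * b c)

include H3 H4 in
theorem bComB {c s : ℕ} (hc : c < m) (hs : s < m) (hcs : c ≠ s) (hm : m % 2 = 0) :
    Commute (b c) (x⁻¹ * (qw b 0 s * tw b (s+1) (m-1-s)) * x⁻¹) := by
  have key := WconjR x b m H3 H4 hs hc hcs hm
  set W := qw b 0 s * tw b (s+1) (m-1-s) with hW
  have key2 : (x * b c * x⁻¹) * W = W * (x⁻¹ * b c * x) := by rw [← key]; group
  show b c * (x⁻¹ * W * x⁻¹) = (x⁻¹ * W * x⁻¹) * b c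
  calc b c * (x⁻¹ * W * x⁻¹) = x⁻¹ * ((x * b c * x⁻¹) * W) * x⁻¹ := by group
    _ = x⁻¹ * (W * (x⁻¹ * b c * x)) * x⁻¹ := by rw [key2]
    _ = (x⁻¹ * W * x⁻¹) * b c := by group

include H3 H4 in
theorem eComB {c s : ℕ} (hc : c < m) (hs : s < m) (hcs : c ≠ s) (hm : m % 2 = 0) :
    Commute (ee b c) (x⁻¹ * (qw b 0 s * tw b (s+1) (m-1-s)) * x⁻¹) := by
  unfold ee
  split
  · exact bComB x b m H3 H4 hc hs hcs hm
  · exact (bComB x b m H3 H4 hc hs hcs hm).inv_left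

include H3 H4 in
theorem zconj {c : ℕ} (hc : c < m) (hm : m % 2 = 0) :
    ee b c * (x⁻¹ * (qw b 0 c * tw b (c+1) (m-1-c)) * x⁻¹) * (ee b c)⁻¹
      = (x⁻¹ * qw b 0 c * x) * (x * tw b (c+1) (m-1-c) * x⁻¹) := by
  rcases Nat.even_or_odd c with hce | hco
  · -- c even
    have hc0 : c % 2 = 0 := Nat.even_iff.mp hce
    have hcm : c + 1 < m := by omega
    have c1 : Commute (b c) (x⁻¹ * qw b 0 c * x) := by
      have := V1 x b m H3 hc (c/2) 0 (by omega) (by omega)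
      rwa [show 2*(c/2) = c from by omega] at this
    have hsplit : tw b (c+1) (m-1-c) = b (c+1) * tw b (c+2) (m-2-c) := by
      rw [show m-1-c = 1 + (m-2-c) from by omega, tw_append, tw_one,
        show c+1+1 = c+2 from rfl]
      simp [ee, show (c+1) % 2 ≠ 0 by omega]
    have c2 : b c * (x⁻¹ * tw b (c+1) (m-1-c) * x⁻¹) * (b c)⁻¹
        = x * tw b (c+1) (m-1-c) * x⁻¹ := by
      have e1 := r1 x b m H3 (show c < c + 1 by omega) hcm
      have e2 : Commute (b c) (x * tw b (c+2) (m-2-c) * x⁻¹) := by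
        have := V2 x b m H3 hc ((m-2-c)/2) (c+2) (by omega) (by omega) (by omega)
        rwa [show 2*((m-2-c)/2) = m-2-c from by omega] at this
      rw [hsplit]
      calc b c * (x⁻¹ * (b (c+1) * tw b (c+2) (m-2-c)) * x⁻¹) * (b c)⁻¹
          = (b c * (x⁻¹ * b (c+1) * x⁻¹) * (b c)⁻¹) *
            (b c * (x * tw b (c+2) (m-2-c) * x⁻¹) * (b c)⁻¹) := by group
        _ = (x * b (c+1) * x⁻¹) * (x * tw b (c+2) (m-2-c) * x⁻¹) := by
            rw [e1, conj_commute x b m H4 e2]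
        _ = x * (b (c+1) * tw b (c+2) (m-2-c)) * x⁻¹ := by group
    have hee : ee b c = b c := by simp [ee, hc0]
    rw [hee]
    calc b c * (x⁻¹ * (qw b 0 c * tw b (c+1) (m-1-c)) * x⁻¹) * (b c)⁻¹
        = (b c * (x⁻¹ * qw b 0 c * x) * (b c)⁻¹) *
          (b c * (x⁻¹ * tw b (c+1) (m-1-c) * x⁻¹) * (b c)⁻¹) := by group
      _ = (x⁻¹ * qw b 0 c * x) * (x * tw b (c+1) (m-1-c) * x⁻¹) := by
          rw [conj_commute x b m H4 c1, c2]
  · -- c odd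
    have hc0 : c % 2 ≠ 0 := by simp [Nat.odd_iff.mp hco]
    have hee : ee b c = (b c)⁻¹ := by simp [ee, hc0]
    have hsplit : qw b 0 c = qw b 0 (c-1) * b (c-1) := by
      rw [show c = (c-1) + 1 from by omega, qw_succ_right]
      rw [show (0:ℕ) + (c-1) = c-1 from by omega, show (c-1)+1 = c from by omega]
      simp [ee, show (c-1) % 2 = 0 from by omega]
    have c1 : (b c)⁻¹ * (x⁻¹ * qw b 0 c * x⁻¹) * b c = x⁻¹ * qw b 0 c * x := by
      have e0 : Commute (b c) (x⁻¹ * qw b 0 (c-1) * x) := by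
        have := V1 x b m H3 hc ((c-1)/2) 0 (by omega) (by omega)
        rwa [show 2*((c-1)/2) = c-1 from by omega] at this
      have e1 := r3 x b m H3 (show c-1 < c by omega) hc
      calc (b c)⁻¹ * (x⁻¹ * qw b 0 c * x⁻¹) * b c
          = ((b c)⁻¹ * (x⁻¹ * qw b 0 (c-1) * x) * b c) *
            ((b c)⁻¹ * (x⁻¹ * b (c-1) * x⁻¹) * b c) := by rw [hsplit]; group
        _ = (x⁻¹ * qw b 0 (c-1) * x) * (x⁻¹ * b (c-1) * x) := by
            rw [conj_commute' e0, e1]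
        _ = x⁻¹ * qw b 0 c * x := by rw [hsplit]; group
    have c2 : Commute (b c) (x * tw b (c+1) (m-1-c) * x⁻¹) := by
      have := V2 x b m H3 hc ((m-1-c)/2) (c+1) (by omega) (by omega) (by omega)
      rwa [show 2*((m-1-c)/2) = m-1-c from by omega] at this
    rw [hee]
    calc (b c)⁻¹ * (x⁻¹ * (qw b 0 c * tw b (c+1) (m-1-c)) * x⁻¹) * ((b c)⁻¹)⁻¹
        = ((b c)⁻¹ * (x⁻¹ * qw b 0 c * x⁻¹) * b c) *
          ((b c)⁻¹ * (x * tw b (c+1) (m-1-c) * x⁻¹) * b c) := by group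
      _ = (x⁻¹ * qw b 0 c * x) * (x * tw b (c+1) (m-1-c) * x⁻¹) := by
          rw [c1, conj_commute' c2]

end Main2

section Main3
variable (x : G) (b : ℕ → G) (m : ℕ)
variable (H3 : ∀ s c, s < c → c < m → b s * (x⁻¹ * b c * x⁻¹) = x * b c * x⁻¹ * b s)
variable (H4 : ∀ c, c < m → b c * (x⁻¹ * b c * x⁻¹) = x⁻¹ * b c * x⁻¹ * b c)

include H3 H4 in
theorem star : ∀ k, k ≤ m → Commute (qw b 0 k * x⁻¹ * qw b 0 k) x := by
  intro k
  induction k with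
  | zero => intro _; simpa using (Commute.refl x).inv_left
  | succ k ih =>
    intro hk1
    have hk : k < m := by omega
    have IH := ih (by omega)
    have hq : qw b 0 (k+1) = qw b 0 k * ee b k := by
      rw [qw_succ_right, show (0:ℕ) + k = k from by omega]
    set P := qw b 0 k with hP
    rcases Nat.even_or_odd k with hke | hko
    · -- k even
      have hk0 : k % 2 = 0 := Nat.even_iff.mp hke
      have hee : ee b k = b k := by simp [ee, hk0]
      rw [hq, hee]
      have key1 : Commute (x * b k * x⁻¹) P := by
        have := RComQ x b m H3 hk (k/2) 0 (by omega) (by omega)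
        rwa [show 2*(k/2) = k from by omega] at this
      have key2 : (x * b k * x⁻¹) * b k = b k * (x⁻¹ * b k * x) := by
        have h := H4 k hk
        calc (x * b k * x⁻¹) * b k = x * (b k * (x⁻¹ * b k * x⁻¹)) * x := by group
          _ = x * (x⁻¹ * b k * x⁻¹ * b k) * x := by rw [h]
          _ = b k * (x⁻¹ * b k * x) := by group
      have key3 := r8 x b m H4 hk
      show (P * b k * x⁻¹ * (P * b k)) * x = x * (P * b k * x⁻¹ * (P * b k))
      calc (P * b k * x⁻¹ * (P * b k)) * x
          = P * x⁻¹ * ((x * b k * x⁻¹) * P) * (b k * x) := by group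
        _ = P * x⁻¹ * (P * (x * b k * x⁻¹)) * (b k * x) := by rw [key1.eq]
        _ = (P * x⁻¹ * P) * (((x * b k * x⁻¹) * b k) * x) := by group
        _ = (P * x⁻¹ * P) * ((b k * (x⁻¹ * b k * x)) * x) := by rw [key2]
        _ = (P * x⁻¹ * P) * (((b k * x⁻¹ * b k) * x) * x) := by group
        _ = (P * x⁻¹ * P) * ((x * (b k * x⁻¹ * b k)) * x) := by rw [key3.eq]
        _ = ((P * x⁻¹ * P) * x) * ((b k * x⁻¹ * b k) * x) := by group
        _ = (x * (P * x⁻¹ * P)) * ((b k * x⁻¹ * b k) * x) := by rw [IH.eq]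
        _ = x * ((P * x⁻¹ * P) * (b k * (x⁻¹ * b k * x))) := by group
        _ = x * ((P * x⁻¹ * P) * ((x * b k * x⁻¹) * b k)) := by rw [← key2]
        _ = x * (P * x⁻¹ * (P * (x * b k * x⁻¹)) * b k) := by group
        _ = x * (P * x⁻¹ * ((x * b k * x⁻¹) * P) * b k) := by rw [← key1.eq]
        _ = x * (P * b k * x⁻¹ * (P * b k)) := by group
    · -- k odd
      have hk0 : k % 2 ≠ 0 := by simp [Nat.odd_iff.mp hko]
      have hee : ee b k = (b k)⁻¹ := by simp [ee, hk0]
      rw [hq, hee]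
      have hsplit : P = qw b 0 (k-1) * b (k-1) := by
        rw [hP, show k = (k-1) + 1 from by omega, qw_succ_right,
          show (0:ℕ) + (k-1) = k-1 from by omega]
        simp [ee, show (k-1) % 2 = 0 from by omega]
      have key1 : Commute (x * b k * x⁻¹) (qw b 0 (k-1)) := by
        have := RComQ x b m H3 hk ((k-1)/2) 0 (by omega) (by omega)
        rwa [show 2*((k-1)/2) = k-1 from by omega] at this
      have key1b : (x * b k * x⁻¹)⁻¹ * b (k-1) = b (k-1) * (x⁻¹ * b k * x⁻¹)⁻¹ := by
        have := r1 x b m H3 (show k-1 < k by omega) hk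
        rw [← this]; group
      have keyP : (x * b k * x⁻¹)⁻¹ * P = P * (x⁻¹ * b k * x⁻¹)⁻¹ := by
        rw [hsplit]
        calc (x * b k * x⁻¹)⁻¹ * (qw b 0 (k-1) * b (k-1))
            = ((x * b k * x⁻¹)⁻¹ * qw b 0 (k-1)) * b (k-1) := by group
          _ = (qw b 0 (k-1) * (x * b k * x⁻¹)⁻¹) * b (k-1) := by rw [key1.inv_left.eq]
          _ = qw b 0 (k-1) * ((x * b k * x⁻¹)⁻¹ * b (k-1)) := by group
          _ = qw b 0 (k-1) * (b (k-1) * (x⁻¹ * b k * x⁻¹)⁻¹) := by rw [key1b]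
          _ = (qw b 0 (k-1) * b (k-1)) * (x⁻¹ * b k * x⁻¹)⁻¹ := by group
      have keyC : (x⁻¹ * b k * x⁻¹)⁻¹ * (b k)⁻¹ = (b k)⁻¹ * (x⁻¹ * b k * x⁻¹)⁻¹ := by
        have h := (r5 x b m H4 hk).inv_left.inv_right.eq
        exact h.symm ▸ by group
      have key3 : Commute ((b k)⁻¹ * x * (b k)⁻¹) x := by
        have h := (r8 x b m H4 hk).inv_left
        have e : (b k * x⁻¹ * b k)⁻¹ = (b k)⁻¹ * x * (b k)⁻¹ := by group
        rwa [e] at h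
      show (P * (b k)⁻¹ * x⁻¹ * (P * (b k)⁻¹)) * x = x * (P * (b k)⁻¹ * x⁻¹ * (P * (b k)⁻¹))
      calc (P * (b k)⁻¹ * x⁻¹ * (P * (b k)⁻¹)) * x
          = P * x⁻¹ * ((x * b k * x⁻¹)⁻¹ * P) * ((b k)⁻¹ * x) := by group
        _ = P * x⁻¹ * (P * (x⁻¹ * b k * x⁻¹)⁻¹) * ((b k)⁻¹ * x) := by rw [keyP]
        _ = (P * x⁻¹ * P) * (((x⁻¹ * b k * x⁻¹)⁻¹ * (b k)⁻¹) * x) := by group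
        _ = (P * x⁻¹ * P) * (((b k)⁻¹ * (x⁻¹ * b k * x⁻¹)⁻¹) * x) := by rw [keyC]
        _ = (P * x⁻¹ * P) * ((((b k)⁻¹ * x * (b k)⁻¹) * x) * x) := by group
        _ = (P * x⁻¹ * P) * ((x * ((b k)⁻¹ * x * (b k)⁻¹)) * x) := by rw [key3.eq]
        _ = ((P * x⁻¹ * P) * x) * (((b k)⁻¹ * x * (b k)⁻¹) * x) := by group
        _ = (x * (P * x⁻¹ * P)) * (((b k)⁻¹ * x * (b k)⁻¹) * x) := by rw [IH.eq]
        _ = x * ((P * x⁻¹ * P) * (((b k)⁻¹ * (x⁻¹ * b k * x⁻¹)⁻¹))) := by group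
        _ = x * ((P * x⁻¹ * P) * ((x⁻¹ * b k * x⁻¹)⁻¹ * (b k)⁻¹)) := by rw [← keyC]
        _ = x * (P * x⁻¹ * (P * (x⁻¹ * b k * x⁻¹)⁻¹) * (b k)⁻¹) := by group
        _ = x * (P * x⁻¹ * ((x * b k * x⁻¹)⁻¹ * P) * (b k)⁻¹) := by rw [← keyP]
        _ = x * (P * (b k)⁻¹ * x⁻¹ * (P * (b k)⁻¹)) := by group

include H3 H4 in
theorem QComB {c : ℕ} (hc : c < m) (hm : m % 2 = 0) : ∀ k, k ≤ c →
    Commute (qw b 0 k) (x⁻¹ * (qw b 0 c * tw b (c+1) (m-1-c)) * x⁻¹) := by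
  intro k
  induction k with
  | zero => intro _; simpa using Commute.one_left _
  | succ k ih =>
    intro hk
    have hq : qw b 0 (k+1) = qw b 0 k * ee b k := by
      rw [qw_succ_right, show (0:ℕ) + k = k from by omega]
    rw [hq]
    exact Commute.mul_left (ih (by omega))
      (eComB x b m H3 H4 (by omega) hc (by omega) hm)

include H3 H4 in
theorem coreG4 {c : ℕ} (hc : c < m) (hm : m % 2 = 0) :
    qw b 0 (c+1) * (x⁻¹ * (qw b 0 c * tw b (c+1) (m-1-c)) * x⁻¹) * (qw b 0 (c+1))⁻¹ *
      (x⁻¹ * (qw b 0 c * tw b (c+1) (m-1-c)) * x⁻¹)⁻¹ = x^2 := by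
  set Q := qw b 0 c with hQ
  set S := tw b (c+1) (m-1-c) with hS
  set B := x⁻¹ * (Q * S) * x⁻¹ with hB
  have hq : qw b 0 (c+1) = Q * ee b c := by
    rw [hQ, qw_succ_right, show (0:ℕ) + c = c from by omega]
  have h1 : ee b c * B * (ee b c)⁻¹ = (x⁻¹ * Q * x) * (x * S * x⁻¹) :=
    zconj x b m H3 H4 hc hm
  have h2 : Commute Q B := QComB x b m H3 H4 hc hm c (le_refl c)
  have h2' : Q⁻¹ * B⁻¹ = B⁻¹ * Q⁻¹ := (h2.inv_left.inv_right).eq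
  have h3 : Commute (Q * x⁻¹ * Q) (x^2) := (star x b m H3 H4 c (by omega)).pow_right 2
  have hBinv : B⁻¹ = x * (S⁻¹ * Q⁻¹) * x := by rw [hB]; group
  calc qw b 0 (c+1) * B * (qw b 0 (c+1))⁻¹ * B⁻¹
      = Q * (ee b c * B * (ee b c)⁻¹) * Q⁻¹ * B⁻¹ := by rw [hq]; group
    _ = Q * ((x⁻¹ * Q * x) * (x * S * x⁻¹)) * Q⁻¹ * B⁻¹ := by rw [h1]
    _ = Q * ((x⁻¹ * Q * x) * (x * S * x⁻¹)) * (Q⁻¹ * B⁻¹) := by group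
    _ = Q * ((x⁻¹ * Q * x) * (x * S * x⁻¹)) * (B⁻¹ * Q⁻¹) := by rw [h2']
    _ = Q * ((x⁻¹ * Q * x) * (x * S * x⁻¹)) * ((x * (S⁻¹ * Q⁻¹) * x) * Q⁻¹) := by
        rw [hBinv]
    _ = (Q * x⁻¹ * Q) * (x * x) * (Q * x⁻¹ * Q)⁻¹ := by group
    _ = (Q * x⁻¹ * Q) * x^2 * (Q * x⁻¹ * Q)⁻¹ := by rw [pow_two]
    _ = x^2 := by rw [h3.eq]; group

end Main3


section Glue
variable {G : Type*} [Group G] (b : ℕ → G)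

theorem ofFn_prod_eq {M : ℕ} (v : ℕ → G) :
    (List.ofFn (fun t : Fin M => v ↑t)).prod = ((List.range M).map v).prod := by
  rw [List.ofFn_eq_map]
  conv_rhs => rw [← (List.ext_getElem (by simp) (by simp) : (List.finRange M).map Fin.val = List.range M), List.map_map]
  rfl

theorem prod_range_eq_qw (v : ℕ → G) (M : ℕ) (h : ∀ t, t < M → v t = ee b t) :
    ((List.range M).map v).prod = qw b 0 M := by
  rw [List.range_eq_range']
  unfold qw
  congr 1
  apply List.map_congr_left
  intro a ha
  rw [List.mem_range'_1] at ha
  exact h a (by omega)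

theorem prod_range_eq_tw (v : ℕ → G) (M : ℕ) (h : ∀ t, t < M → v t = (ee b t)⁻¹) :
    ((List.range M).map v).prod = tw b 0 M := by
  rw [List.range_eq_range']
  unfold tw
  congr 1
  apply List.map_congr_left
  intro a ha
  rw [List.mem_range'_1] at ha
  exact h a (by omega)

theorem range_split3 (M c : ℕ) (hc : c < M) :
    List.range M = List.range' 0 c ++ (List.range' c 1 ++ List.range' (c+1) (M-1-c)) := by
  have A : List.range' c 1 ++ List.range' (c+1) (M-1-c) = List.range' c ((M-1-c)+1) := by
    simpa [Nat.add_comm] using List.range'_append_1 (s := c) (m := 1) (n := M-1-c)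
  have B : List.range' 0 c ++ List.range' c ((M-1-c)+1) = List.range' 0 (((M-1-c)+1)+c) := by
    simpa [Nat.add_comm] using List.range'_append_1 (s := 0) (m := c) (n := (M-1-c)+1)
  rw [List.range_eq_range', A, B]
  congr 1
  omega

theorem prod_range_split (v : ℕ → G) (M c : ℕ) (hc : c < M)
    (h1 : ∀ t, t < c → v t = ee b t) (h2 : v c = 1)
    (h3 : ∀ t, c < t → t < M → v t = (ee b t)⁻¹) :
    ((List.range M).map v).prod = qw b 0 c * tw b (c+1) (M-1-c) := by
  rw [range_split3 M c hc]
  simp only [List.map_append, List.prod_append]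
  have e1 : ((List.range' 0 c).map v).prod = qw b 0 c := by
    unfold qw; congr 1
    apply List.map_congr_left
    intro a ha; rw [List.mem_range'_1] at ha; exact h1 a (by omega)
  have e2 : ((List.range' c 1).map v).prod = 1 := by
    simp [List.range'_succ, h2]
  have e3 : ((List.range' (c+1) (M-1-c)).map v).prod = tw b (c+1) (M-1-c) := by
    unfold tw; congr 1
    apply List.map_congr_left
    intro a ha; rw [List.mem_range'_1] at ha; exact h3 a (by omega) (by omega)
  rw [e1, e2, e3]; group

theorem prod_range_prefix (v : ℕ → G) (M c : ℕ) (hc : c < M)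
    (h1 : ∀ t, t ≤ c → v t = ee b t) (h2 : ∀ t, c < t → t < M → v t = 1) :
    ((List.range M).map v).prod = qw b 0 (c+1) := by
  have hsp : List.range M = List.range' 0 (c+1) ++ List.range' (c+1) (M-1-c) := by
    have B : List.range' 0 (c+1) ++ List.range' (c+1) (M-1-c)
        = List.range' 0 ((M-1-c)+(c+1)) := by
      simpa [Nat.add_comm] using List.range'_append_1 (s := 0) (m := c+1) (n := M-1-c)
    rw [List.range_eq_range', B]
    congr 1; omega
  rw [hsp]
  simp only [List.map_append, List.prod_append]
  have e1 : ((List.range' 0 (c+1)).map v).prod = qw b 0 (c+1) := by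
    unfold qw; congr 1
    apply List.map_congr_left
    intro a ha; rw [List.mem_range'_1] at ha; exact h1 a (by omega)
  have e2 : ((List.range' (c+1) (M-1-c)).map v).prod = 1 := by
    apply List.prod_eq_one
    intro y hy
    simp only [List.mem_map] at hy
    obtain ⟨a, ha, rfl⟩ := hy
    rw [List.mem_range'_1] at ha
    exact h2 a (by omega) (by omega)
  rw [e1, e2, mul_one]

end Glue

end GMHelp

namespace GMGlue
open GMHelp

variable (n g : ℕ)

def pr : FreeGroup (Gens n g) →* PresentedGroup (mRels n g) :=
  QuotientGroup.mk' (Subgroup.normalClosure (mRels n g))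

theorem pr_rel {r : FreeGroup (Gens n g)} (hr : r ∈ mRels n g) : pr n g r = 1 :=
  (QuotientGroup.eq_one_iff r).mpr (Subgroup.subset_normalClosure hr)

theorem pr_eq_of_rel {u v : FreeGroup (Gens n g)} (hm : u * v⁻¹ ∈ mRels n g) :
    pr n g u = pr n g v := by
  have h := pr_rel n g hm
  rw [map_mul, map_inv] at h
  exact mul_inv_eq_one.mp h

theorem pr_of (z : Gens n g) : pr n g (FreeGroup.of z) = PresentedGroup.of z := rfl

noncomputable def bb : ℕ → PresentedGroup (mRels n g) := fun t =>
  if h : t < 2*g then pr n g (ug ⟨t, h⟩) else 1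

theorem bb_eq (j : Fin (2*g)) : bb n g ↑j = pr n g (ug j) := by
  have : (↑j : ℕ) < 2*g := j.isLt
  simp [bb, this]

def ff : Gens n g → PresentedGroup (mRels n g)
  | Sum.inl i => PresentedGroup.of (Sum.inl i)
  | Sum.inr j => if (j : ℕ) % 2 = 0 then PresentedGroup.of (Sum.inr j)
      else (PresentedGroup.of (Sum.inr j))⁻¹

noncomputable def FF : FreeGroup (Gens n g) →* PresentedGroup (mRels n g) :=
  FreeGroup.lift (ff n g)

theorem FF_sg (i : Fin (n-1)) : FF n g (sg i) = pr n g (sg i) := by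
  show FreeGroup.lift (ff n g) (FreeGroup.of (Sum.inl i)) = _
  rw [FreeGroup.lift_apply_of]
  rfl

theorem FF_ug (j : Fin (2*g)) : FF n g (ug j) = ee (bb n g) ↑j := by
  show FreeGroup.lift (ff n g) (FreeGroup.of (Sum.inr j)) = _
  rw [FreeGroup.lift_apply_of]
  unfold ee
  rw [bb_eq]
  rfl

-- the σ₁ element
def xx (h : 0 < n - 1) : PresentedGroup (mRels n g) := pr n g (sg ⟨0, h⟩)

-- extraction of the relations of M
theorem relH3 (h : 0 < n - 1) (s c : ℕ) (hsc : s < c) (hc : c < 2*g) :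
    bb n g s * ((xx n g h)⁻¹ * bb n g c * (xx n g h)⁻¹)
      = xx n g h * bb n g c * (xx n g h)⁻¹ * bb n g s := by
  have hs2 : s < 2*g := by omega
  have hmem : (ug (⟨s,hs2⟩ : Fin (2*g)) * (sg ⟨0,h⟩)⁻¹ * ug (⟨c,hc⟩ : Fin (2*g)) *
      (sg ⟨0,h⟩)⁻¹ *
      (sg ⟨0,h⟩ * ug (⟨c,hc⟩ : Fin (2*g)) * (sg ⟨0,h⟩)⁻¹ * ug ⟨s,hs2⟩)⁻¹ :
      FreeGroup (Gens n g)) ∈ mRels n g := by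
    apply Set.mem_union_right
    exact Or.inr (Or.inl ⟨h, ⟨s,hs2⟩, ⟨c,hc⟩, hsc, rfl⟩)
  have h1 := pr_eq_of_rel n g hmem
  simp only [map_mul, map_inv] at h1
  have es : pr n g (ug (⟨s,hs2⟩ : Fin (2*g))) = bb n g s := (bb_eq n g ⟨s,hs2⟩).symm
  have ec : pr n g (ug (⟨c,hc⟩ : Fin (2*g))) = bb n g c := (bb_eq n g ⟨c,hc⟩).symm
  rw [es, ec] at h1
  calc bb n g s * ((xx n g h)⁻¹ * bb n g c * (xx n g h)⁻¹)
      = bb n g s * (pr n g (sg ⟨0,h⟩))⁻¹ * bb n g c * (pr n g (sg ⟨0,h⟩))⁻¹ := by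
        unfold xx; group
    _ = pr n g (sg ⟨0,h⟩) * bb n g c * (pr n g (sg ⟨0,h⟩))⁻¹ * bb n g s := h1
    _ = xx n g h * bb n g c * (xx n g h)⁻¹ * bb n g s := by unfold xx; group

theorem relH4 (h : 0 < n - 1) (c : ℕ) (hc : c < 2*g) :
    bb n g c * ((xx n g h)⁻¹ * bb n g c * (xx n g h)⁻¹)
      = (xx n g h)⁻¹ * bb n g c * (xx n g h)⁻¹ * bb n g c := by
  have hmem : (ug (⟨c,hc⟩ : Fin (2*g)) * (sg ⟨0,h⟩)⁻¹ * ug (⟨c,hc⟩ : Fin (2*g)) *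
      (sg ⟨0,h⟩)⁻¹ *
      ((sg ⟨0,h⟩)⁻¹ * ug (⟨c,hc⟩ : Fin (2*g)) * (sg ⟨0,h⟩)⁻¹ * ug ⟨c,hc⟩)⁻¹ :
      FreeGroup (Gens n g)) ∈ mRels n g := by
    apply Set.mem_union_right
    exact Or.inr (Or.inr (Or.inl ⟨h, ⟨c,hc⟩, rfl⟩))
  have h1 := pr_eq_of_rel n g hmem
  simp only [map_mul, map_inv] at h1
  have ec : pr n g (ug (⟨c,hc⟩ : Fin (2*g))) = bb n g c := (bb_eq n g ⟨c,hc⟩).symm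
  rw [ec] at h1
  calc bb n g c * ((xx n g h)⁻¹ * bb n g c * (xx n g h)⁻¹)
      = bb n g c * (pr n g (sg ⟨0,h⟩))⁻¹ * bb n g c * (pr n g (sg ⟨0,h⟩))⁻¹ := by
        unfold xx; group
    _ = (pr n g (sg ⟨0,h⟩))⁻¹ * bb n g c * (pr n g (sg ⟨0,h⟩))⁻¹ * bb n g c := h1
    _ = (xx n g h)⁻¹ * bb n g c * (xx n g h)⁻¹ * bb n g c := by unfold xx; group

theorem relM2 (c : Fin (2*g)) (i : Fin (n-1)) (hi : (i:ℕ) ≠ 0) :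
    Commute (pr n g (ug c)) (pr n g (sg i)) := by
  have hmem : (ug c * sg i * (sg i * ug c)⁻¹ : FreeGroup (Gens n g)) ∈ mRels n g := by
    apply Set.mem_union_right
    exact Or.inl ⟨i, c, hi, rfl⟩
  have h1 := pr_eq_of_rel n g hmem
  simp only [map_mul] at h1
  exact h1

theorem relTR :
    pr n g (trLeft n g) * pr n g (trRight n g) = pr n g (deltaWord n g) := by
  have hmem : (trLeft n g * trRight n g * (deltaWord n g)⁻¹ :
      FreeGroup (Gens n g)) ∈ mRels n g := by
    apply Set.mem_union_right
    exact Or.inr (Or.inr (Or.inr rfl))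
  have h1 := pr_eq_of_rel n g hmem
  rw [map_mul] at h1
  exact h1

end GMGlue

namespace GMGlue
open GMHelp

variable (n g : ℕ)

theorem FF_aWord (h : 0 < n - 1) (c : Fin (2*g)) :
    FF n g (aWord n g h c)
      = (xx n g h)⁻¹ *
        (qw (bb n g) 0 ↑c * tw (bb n g) (↑c+1) (2*g-1-↑c)) * (xx n g h)⁻¹ := by
  unfold aWord
  rw [map_mul, map_mul, map_inv, FF_sg]
  have hprod : FF n g ((List.ofFn fun t : Fin (2*g) =>
      if (t:ℕ) < (c:ℕ) then ug t else if (t:ℕ) = (c:ℕ) then 1 else (ug t)⁻¹).prod)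
      = qw (bb n g) 0 ↑c * tw (bb n g) (↑c+1) (2*g-1-↑c) := by
    rw [map_list_prod, List.map_ofFn]
    have hfn : (⇑(FF n g)) ∘ (fun t : Fin (2*g) =>
        if (t:ℕ) < (c:ℕ) then ug t else if (t:ℕ) = (c:ℕ) then 1 else (ug t)⁻¹)
        = fun t : Fin (2*g) => (fun u : ℕ => if u < (c:ℕ) then ee (bb n g) u
            else if u = (c:ℕ) then 1 else (ee (bb n g) u)⁻¹) ↑t := by
      funext t
      simp only [Function.comp_apply]
      split_ifs with h1 h2
      · exact FF_ug n g t
      · exact map_one _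
      · rw [map_inv, FF_ug]
    rw [hfn, ofFn_prod_eq (fun u : ℕ => if u < (c:ℕ) then ee (bb n g) u
      else if u = (c:ℕ) then 1 else (ee (bb n g) u)⁻¹)]
    apply prod_range_split
    · exact c.isLt
    · intro t ht; simp [ht]
    · simp
    · intro t ht1 ht2
      rw [if_neg (by omega), if_neg (by omega)]
  rw [hprod]
  show (pr n g (sg ⟨0,h⟩))⁻¹ * _ * (pr n g (sg ⟨0,h⟩))⁻¹ = _
  rfl

theorem FF_prefix (c : Fin (2*g)) :
    FF n g (prefixWord n g c) = qw (bb n g) 0 (↑c+1) := by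
  unfold prefixWord
  rw [map_list_prod, List.map_ofFn]
  have hfn : (⇑(FF n g)) ∘ (fun t : Fin (2*g) => if (t:ℕ) ≤ (c:ℕ) then ug t else 1)
      = fun t : Fin (2*g) => (fun u : ℕ => if u ≤ (c:ℕ) then ee (bb n g) u else 1) ↑t := by
    funext t
    simp only [Function.comp_apply]
    split_ifs with h1
    · exact FF_ug n g t
    · exact map_one _
  rw [hfn, ofFn_prod_eq (fun u : ℕ => if u ≤ (c:ℕ) then ee (bb n g) u else 1)]
  apply prod_range_prefix
  · exact c.isLt
  · intro t ht; simp [ht]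
  · intro t ht1 ht2; rw [if_neg (by omega)]

theorem FF_prodA :
    FF n g ((List.ofFn fun t : Fin (2*g) => ug t).prod) = qw (bb n g) 0 (2*g) := by
  rw [map_list_prod, List.map_ofFn]
  have hfn : (⇑(FF n g)) ∘ (fun t : Fin (2*g) => ug t)
      = fun t : Fin (2*g) => (fun u : ℕ => ee (bb n g) u) ↑t := by
    funext t; exact FF_ug n g t
  rw [hfn, ofFn_prod_eq (fun u : ℕ => ee (bb n g) u)]
  exact prod_range_eq_qw _ _ _ (fun t _ => rfl)

theorem FF_prodAinv :
    FF n g ((List.ofFn fun t : Fin (2*g) => (ug t)⁻¹).prod) = tw (bb n g) 0 (2*g) := by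
  rw [map_list_prod, List.map_ofFn]
  have hfn : (⇑(FF n g)) ∘ (fun t : Fin (2*g) => (ug t)⁻¹)
      = fun t : Fin (2*g) => (fun u : ℕ => (ee (bb n g) u)⁻¹) ↑t := by
    funext t
    simp only [Function.comp_apply, map_inv]
    rw [FF_ug]
  rw [hfn, ofFn_prod_eq (fun u : ℕ => (ee (bb n g) u)⁻¹)]
  exact prod_range_eq_tw _ _ _ (fun t _ => rfl)

theorem pr_trLeft : pr n g (trLeft n g) = qw (bb n g) 0 (2*g) := by
  unfold trLeft
  rw [map_list_prod, List.map_ofFn]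
  have hfn : (⇑(pr n g)) ∘ (fun j : Fin (2*g) => if (j:ℕ) % 2 = 0 then ug j else (ug j)⁻¹)
      = fun t : Fin (2*g) => (fun u : ℕ => ee (bb n g) u) ↑t := by
    funext j
    simp only [Function.comp_apply]
    unfold ee
    split_ifs with h1
    · exact (bb_eq n g j).symm
    · rw [map_inv, bb_eq]
  rw [hfn, ofFn_prod_eq (fun u : ℕ => ee (bb n g) u)]
  exact prod_range_eq_qw _ _ _ (fun t _ => rfl)

theorem pr_trRight : pr n g (trRight n g) = tw (bb n g) 0 (2*g) := by
  unfold trRight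
  rw [map_list_prod, List.map_ofFn]
  have hfn : (⇑(pr n g)) ∘ (fun j : Fin (2*g) => if (j:ℕ) % 2 = 0 then (ug j)⁻¹ else ug j)
      = fun t : Fin (2*g) => (fun u : ℕ => (ee (bb n g) u)⁻¹) ↑t := by
    funext j
    simp only [Function.comp_apply]
    unfold ee
    split_ifs with h1
    · rw [map_inv, bb_eq]
    · rw [bb_eq, inv_inv]
  rw [hfn, ofFn_prod_eq (fun u : ℕ => (ee (bb n g) u)⁻¹)]
  exact prod_range_eq_tw _ _ _ (fun t _ => rfl)

theorem FF_delta : FF n g (deltaWord n g) = pr n g (deltaWord n g) := by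
  unfold deltaWord
  have hfn : (⇑(FF n g)) ∘ (sg : Fin (n-1) → FreeGroup (Gens n g))
      = (⇑(pr n g)) ∘ sg := funext fun i => FF_sg n g i
  simp only [map_mul, map_list_prod, List.map_reverse, List.map_ofFn]
  rw [hfn]

end GMGlue

namespace GMGlue
open GMHelp

theorem main_ob (n g : ℕ) : ∀ r ∈ gmRels n g, FreeGroup.lift (ff n g) r = 1 := by
  intro r hr
  show FF n g r = 1
  rcases hr with hbraid | hrest
  · -- braid relators map to braid relators
    have hmem : r ∈ mRels n g := Set.mem_union_left _ hbraid
    have heq : FF n g r = pr n g r := by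
      rcases hbraid with ⟨i, j, hij, rfl⟩ | ⟨i, j, hij, rfl⟩ <;>
        simp only [map_mul, map_inv, FF_sg]
    rw [heq]
    exact pr_rel n g hmem
  · rcases hrest with ⟨h, c, s, hcs, rfl⟩ | ⟨c, i, hi, rfl⟩ | ⟨h, c, rfl⟩ | rfl
    · -- [a_c, A_{2,s}] = 1
      have H3fn : ∀ s' c' : ℕ, s' < c' → c' < 2*g →
          bb n g s' * ((xx n g h)⁻¹ * bb n g c' * (xx n g h)⁻¹)
            = xx n g h * bb n g c' * (xx n g h)⁻¹ * bb n g s' :=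
        fun s' c' hsc hc => relH3 n g h s' c' hsc hc
      have H4fn : ∀ c' : ℕ, c' < 2*g →
          bb n g c' * ((xx n g h)⁻¹ * bb n g c' * (xx n g h)⁻¹)
            = (xx n g h)⁻¹ * bb n g c' * (xx n g h)⁻¹ * bb n g c' :=
        fun c' hc => relH4 n g h c' hc
      have hcomm := eComB (xx n g h) (bb n g) (2*g) H3fn H4fn
        (c := (c:ℕ)) (s := (s:ℕ)) c.isLt s.isLt
        (fun hh => hcs (Fin.ext hh)) (by omega)
      rw [map_mul, map_mul, map_mul, map_inv, map_inv, FF_ug, FF_aWord]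
      calc ee (bb n g) ↑c *
            ((xx n g h)⁻¹ * (qw (bb n g) 0 ↑s * tw (bb n g) (↑s+1) (2*g-1-↑s)) * (xx n g h)⁻¹) *
            (ee (bb n g) ↑c)⁻¹ *
            ((xx n g h)⁻¹ * (qw (bb n g) 0 ↑s * tw (bb n g) (↑s+1) (2*g-1-↑s)) * (xx n g h)⁻¹)⁻¹
          = (((xx n g h)⁻¹ * (qw (bb n g) 0 ↑s * tw (bb n g) (↑s+1) (2*g-1-↑s)) * (xx n g h)⁻¹) *
              ee (bb n g) ↑c) *
            (ee (bb n g) ↑c)⁻¹ *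
            ((xx n g h)⁻¹ * (qw (bb n g) 0 ↑s * tw (bb n g) (↑s+1) (2*g-1-↑s)) * (xx n g h)⁻¹)⁻¹ := by
            rw [hcomm.eq]
        _ = 1 := by group
    · -- [a_c, σ_i] = 1
      have hcomm : Commute (ee (bb n g) ↑c) (pr n g (sg i)) := by
        unfold ee
        rw [bb_eq]
        split_ifs
        · exact relM2 n g c i hi
        · exact (relM2 n g c i hi).inv_left
      rw [map_mul, map_mul, map_mul, map_inv, map_inv, FF_ug, FF_sg]
      calc ee (bb n g) ↑c * pr n g (sg i) * (ee (bb n g) ↑c)⁻¹ * (pr n g (sg i))⁻¹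
          = (pr n g (sg i) * ee (bb n g) ↑c) * (ee (bb n g) ↑c)⁻¹ * (pr n g (sg i))⁻¹ := by
            rw [hcomm.eq]
        _ = 1 := by group
    · -- [a_1⋯a_c, A_{2,c}] = σ₁²
      have H3fn : ∀ s' c' : ℕ, s' < c' → c' < 2*g →
          bb n g s' * ((xx n g h)⁻¹ * bb n g c' * (xx n g h)⁻¹)
            = xx n g h * bb n g c' * (xx n g h)⁻¹ * bb n g s' :=
        fun s' c' hsc hc => relH3 n g h s' c' hsc hc
      have H4fn : ∀ c' : ℕ, c' < 2*g →
          bb n g c' * ((xx n g h)⁻¹ * bb n g c' * (xx n g h)⁻¹)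
            = (xx n g h)⁻¹ * bb n g c' * (xx n g h)⁻¹ * bb n g c' :=
        fun c' hc => relH4 n g h c' hc
      have hG4 := coreG4 (xx n g h) (bb n g) (2*g) H3fn H4fn (c := (c:ℕ)) c.isLt (by omega)
      rw [map_mul, map_mul, map_mul, map_mul, map_inv, map_inv, map_inv, map_pow,
        FF_prefix, FF_aWord, FF_sg]
      have hxx : pr n g (sg ⟨0,h⟩) = xx n g h := rfl
      rw [hxx, hG4]
      group
    · -- total relator
      rw [map_mul, map_mul, map_inv, FF_prodA, FF_prodAinv, FF_delta]
      have htr := relTR n g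
      rw [pr_trLeft, pr_trRight] at htr
      rw [← htr]
      group

end GMGlue

/-- **Comparison of the two presentations of braid groups of closed orientable surfaces.**
There is a group homomorphism `GM(n,g) → M(n,g)` sending `σ_i ↦ σ_i` and sending
`a_j ↦ b_j` for odd (1-based) `j` and `a_j ↦ b_j⁻¹` for even `j`. -/
theorem gm_to_m_hom (n g : ℕ) (hn : 1 ≤ n) (hg : 1 ≤ g) :
    ∃ φ : PresentedGroup (gmRels n g) →* PresentedGroup (mRels n g),
      (∀ i : Fin (n - 1), φ (PresentedGroup.of (Sum.inl i)) = PresentedGroup.of (Sum.inl i)) ∧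
      (∀ j : Fin (2 * g), φ (PresentedGroup.of (Sum.inr j)) =
        if (j : ℕ) % 2 = 0 then PresentedGroup.of (Sum.inr j)
        else (PresentedGroup.of (Sum.inr j))⁻¹) := by
  classical
  refine ⟨PresentedGroup.toGroup (GMGlue.main_ob n g), ?_, ?_⟩
  · intro i
    rw [PresentedGroup.toGroup.of]
    rfl
  · intro j
    rw [PresentedGroup.toGroup.of]
    rfl
end

section
/- Let n ≥ 1, let E ⊆ T² be an open connected subset, and let f : Fin n → E be injective, giving basepoints in Conf_n(E) and Conf_n(T²). If the homomorphism π₁(Conf_n(E), f) → π₁(Conf_n(T²), f) induced by the inclusion E ↪ T² is surjective, then the homomorphism π₁(E, f(1)) → π₁(T², f(1)) induced by the inclusion is surjective. (This is the key implication in the paper's characterization of when the inclusion-induced map on surface braid groups is surjective.) -/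
open CategoryTheory FundamentalGroupoid

/-- Ordered configuration space. -/
def Conf (n : ℕ) (X : Type) [TopologicalSpace X] : Type :=
  {f : Fin n → X // Function.Injective f}

instance {n : ℕ} {X : Type} [TopologicalSpace X] : TopologicalSpace (Conf n X) :=
  inferInstanceAs (TopologicalSpace {f : Fin n → X // Function.Injective f})

/-- The orbit equivalence relation of the action of the symmetric group on `Conf n X`
by precomposition. -/
def confSetoid (n : ℕ) (X : Type) [TopologicalSpace X] : Setoid (Conf n X) where
  r f g := ∃ e : Equiv.Perm (Fin n), f.1 ∘ e = g.1
  iseqv := by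
    constructor
    · intro f; exact ⟨Equiv.refl _, rfl⟩
    · rintro f g ⟨e, he⟩
      exact ⟨e.symm, by rw [← he]; funext x; simp⟩
    · rintro f g h ⟨e, he⟩ ⟨e', he'⟩
      exact ⟨e'.trans e, by rw [← he', ← he]; funext x; simp⟩

/-- Unordered configuration space. -/
def UConf (n : ℕ) (X : Type) [TopologicalSpace X] : Type :=
  Quotient (confSetoid n X)

instance {n : ℕ} {X : Type} [TopologicalSpace X] : TopologicalSpace (UConf n X) :=
  inferInstanceAs (TopologicalSpace (Quotient (confSetoid n X)))

/-- The homomorphism of fundamental groups induced by a continuous map. -/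
noncomputable def indHom {X Y : Type} [TopologicalSpace X] [TopologicalSpace Y]
    (f : C(X, Y)) (x : X) :
    FundamentalGroup X x →* FundamentalGroup Y (f x) :=
  CategoryTheory.Functor.mapEnd ⟨x⟩ (πₘ (show TopCat.of X ⟶ TopCat.of Y from TopCat.ofHom f))

/-- The torus `(ℝ/ℤ) × (ℝ/ℤ)`. -/
abbrev Torus : Type := AddCircle (1 : ℝ) × AddCircle (1 : ℝ)

/-- The canonical quotient (covering) map `ℝ² → T²`. -/
noncomputable def torusQuot : ℝ × ℝ → Torus := fun x => ((x.1 : AddCircle (1 : ℝ)), (x.2 : AddCircle (1 : ℝ)))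

/-- The open disk `q((0,1) × (0,1))` in the torus. -/
def DTorus : Set Torus := torusQuot '' (Set.Ioo (0 : ℝ) 1 ×ˢ Set.Ioo (0 : ℝ) 1)

/-- The continuous map `Conf n E → Conf n X` induced by the inclusion `E ⊆ X`. -/
def confIncl {n : ℕ} {X : Type} [TopologicalSpace X] (E : Set X) :
    C(Conf n ↥E, Conf n X) where
  toFun c := ⟨fun k => (c.1 k : X), fun i j hij => c.2 (Subtype.val_injective hij)⟩
  continuous_toFun := Continuous.subtype_mk
    (continuous_pi fun k =>
      continuous_subtype_val.comp ((continuous_apply k).comp continuous_subtype_val)) _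

/-- The continuous map `UConf n E → UConf n X` induced by the inclusion `E ⊆ X`. -/
def uconfIncl {n : ℕ} {X : Type} [TopologicalSpace X] (E : Set X) :
    C(UConf n ↥E, UConf n X) where
  toFun := Quotient.map' (confIncl E) (by
    rintro c c' ⟨e, he⟩
    exact ⟨e, by funext k; exact congrArg Subtype.val (congrFun he k)⟩)
  continuous_toFun := Continuous.quotient_map' (confIncl E).continuous _

/-- The continuous evaluation map `Conf n X → X` at the `k`-th strand. -/
def confEval {n : ℕ} {X : Type} [TopologicalSpace X] (k : Fin n) :
    C(Conf n X, X) where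
  toFun c := c.1 k
  continuous_toFun := (continuous_apply k).comp continuous_subtype_val

/-- Functoriality of `indHom`. -/
lemma indHom_comp {X Y Z : Type} [TopologicalSpace X] [TopologicalSpace Y] [TopologicalSpace Z]
    (f : C(X, Y)) (g : C(Y, Z)) (x : X) (p : FundamentalGroup X x) :
    indHom g (f x) (indHom f x p) = indHom (g.comp f) x p := by
  have hg : ∃ γ : Path x x, (⟦γ⟧ : Path.Homotopic.Quotient x x) = p :=
    Quotient.exists_rep p
  obtain ⟨γ, hγ⟩ := hg
  show (πₘ (show TopCat.of Y ⟶ TopCat.of Z from TopCat.ofHom g)).map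
      ((πₘ (show TopCat.of X ⟶ TopCat.of Y from TopCat.ofHom f)).map p) =
    (πₘ (show TopCat.of X ⟶ TopCat.of Z from TopCat.ofHom (g.comp f))).map p
  rw [← hγ]
  exact (Path.Homotopic.Quotient.map_comp (p := (⟦γ⟧ : Path.Homotopic.Quotient x x)) (f := f) (g := g)).symm

/-- The loop in `Conf n Torus` obtained from a loop in the torus by translating all the
points of a base configuration. -/
noncomputable def liftPath {n : ℕ} (b : Conf n Torus) (k : Fin n)
    (γ : Path (b.1 k) (b.1 k)) : Path b b where
  toFun t := ⟨fun j => (b.1 j - b.1 k) + γ t, fun i j h => b.2 (by rwa [add_left_inj, sub_left_inj] at h)⟩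
  continuous_toFun := Continuous.subtype_mk
    (continuous_pi fun j => continuous_const.add γ.continuous) _
  source' := by
    apply Subtype.ext
    funext j
    show (b.1 j - b.1 k) + γ 0 = b.1 j
    simp
  target' := by
    apply Subtype.ext
    funext j
    show (b.1 j - b.1 k) + γ 1 = b.1 j
    simp

/-- Evaluation at the `k`-th strand is surjective on fundamental groups. -/
lemma eval_surjective {n : ℕ} (b : Conf n Torus) (k : Fin n) :
    Function.Surjective (indHom (confEval k) b) := by
  intro g
  have hg : ∃ γ : Path (b.1 k) (b.1 k),
      (⟦γ⟧ : Path.Homotopic.Quotient (b.1 k) (b.1 k)) = g := Quotient.exists_rep g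
  obtain ⟨γ, hγ⟩ := hg
  refine ⟨FundamentalGroup.fromPath (X := TopCat.of (Conf n Torus))
    (⟦liftPath b k γ⟧ : Path.Homotopic.Quotient b b), ?_⟩
  show (πₘ (show TopCat.of (Conf n Torus) ⟶ TopCat.of Torus from TopCat.ofHom (confEval k))).map
      (⟦liftPath b k γ⟧ : Path.Homotopic.Quotient b b) = g
  show Path.Homotopic.Quotient.mk ((liftPath b k γ).map (confEval k).continuous) = g
  rw [← hγ]
  show Path.Homotopic.Quotient.mk _ = Path.Homotopic.Quotient.mk γ
  congr 1
  apply Path.ext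
  funext t
  show (b.1 k - b.1 k) + γ t = γ t
  simp

/-- **Key implication in the characterization of surjectivity of inclusion-induced maps of
surface braid groups (for the torus):** if, for an open connected subsurface `E ⊆ T²`, the
map `P(n,E) → P(n,T²)` induced by inclusion is surjective, then `π₁(E) → π₁(T²)` is
surjective. -/
theorem pi1_surjective_of_conf_surjective (n : ℕ) (hn : 1 ≤ n)
    (E : Set Torus) (hE : IsOpen E) (hEc : IsConnected E)
    (f : Fin n → ↥E) (hf : Function.Injective f)
    (hsurj : Function.Surjective (indHom (confIncl E) (⟨f, hf⟩ : Conf n ↥E))) :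
    Function.Surjective
      (indHom (⟨Subtype.val, continuous_subtype_val⟩ : C(↥E, Torus)) (f ⟨0, hn⟩)) := by
  intro g
  set base : Conf n ↥E := ⟨f, hf⟩
  set b : Conf n Torus := confIncl E base
  obtain ⟨q, hq⟩ := eval_surjective b ⟨0, hn⟩ g
  obtain ⟨p, hp⟩ := hsurj q
  refine ⟨indHom (confEval ⟨0, hn⟩) base p, ?_⟩
  have h1 := indHom_comp (confEval (⟨0, hn⟩ : Fin n) : C(Conf n ↥E, ↥E))
    (⟨Subtype.val, continuous_subtype_val⟩ : C(↥E, Torus)) base p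
  have h2 := indHom_comp (confIncl E : C(Conf n ↥E, Conf n Torus))
    (confEval (⟨0, hn⟩ : Fin n) : C(Conf n Torus, Torus)) base p
  exact h1.trans (h2.symm.trans (by rw [hp, hq]))
end
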